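/- The curve Γ(s) = (cos s, sin s cos s, (1/24)(-9 sin s - sin 3s)) has no self-intersections on [0, 2π): if s₁, s₂ ∈ [0, 2π) and Γ(s₁) = Γ(s₂), then s₁ = s₂. -/
import Mathlib

abbrev H : Type := ℝ × ℝ × ℝ

noncomputable def Γ (s : ℝ) : H :=
  (Real.cos s, Real.sin s * Real.cos s,
    (1 / 24) * (-9 * Real.sin s - Real.sin (3 * s)))

/-- Γ has no self-intersections on [0, 2π). -/
theorem gerono_lift_injective :
    Set.InjOn Γ (Set.Ico 0 (2 * Real.pi)) := by
  intro s₁ hs₁ s₂ hs₂ h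
  obtain ⟨h1, h2, h3⟩ : Real.cos s₁ = Real.cos s₂ ∧
      Real.sin s₁ * Real.cos s₁ = Real.sin s₂ * Real.cos s₂ ∧
      (1 / 24) * (-9 * Real.sin s₁ - Real.sin (3 * s₁)) =
        (1 / 24) * (-9 * Real.sin s₂ - Real.sin (3 * s₂)) := by
    simpa [Γ, Prod.ext_iff] using h
  rw [Real.sin_three_mul, Real.sin_three_mul] at h3
  set a := Real.sin s₁
  set b := Real.sin s₂
  have key : (a - b) * (a ^ 2 + a * b + b ^ 2 - 3) = 0 := by nlinarith [h3]
  have ha : a ^ 2 ≤ 1 := by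
    have := Real.sin_sq_le_one s₁; simpa using this
  have hb : b ^ 2 ≤ 1 := by
    have := Real.sin_sq_le_one s₂; simpa using this
  have hsin : a = b := by
    rcases mul_eq_zero.1 key with h0 | h0
    · linarith
    · nlinarith [sq_nonneg (a - b), sq_nonneg (a + b)]
  have hangle : (s₁ : Real.Angle) = (s₂ : Real.Angle) :=
    Real.Angle.cos_sin_inj h1 hsin
  obtain ⟨k, hk⟩ := Real.Angle.angle_eq_iff_two_pi_dvd_sub.1 hangle
  have hpi := Real.pi_pos
  have hk0 : k = 0 := by
    have h1' : (k : ℝ) < 1 := by nlinarith [hs₁.1, hs₁.2, hs₂.1, hs₂.2]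
    have h2' : (-1 : ℝ) < (k : ℝ) := by nlinarith [hs₁.1, hs₁.2, hs₂.1, hs₂.2]
    have : -1 < k ∧ k < 1 := ⟨by exact_mod_cast h2', by exact_mod_cast h1'⟩
    omega
  rw [hk0] at hk
  simp at hk
  linarith
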